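/- Let P1 and P2 be graph patterns whose translations ⟪P1⟫^G and ⟪P2⟫^G correctly represent ⟦P1⟧_{D(G_j)} and ⟦P2⟧_{D(G_j)} for each graph identifier j, and let var(P1) ∩ var(P2) = {v_1,…,v_n}. Then in the translated expression ⟪(P1 AND P2)⟫^G — which renames each common variable v_i to v'_i in ⟪P1⟫^G and to v''_i in ⟪P2⟫^G, joins the results (sharing only attribute G), selects with the conjunction over i of (v'_i = unb ∨ v''_i = unb ∨ v'_i = v''_i), and projects with v_i ← first(v'_i, v''_i), where first returns its first non-unb argument and unb if both are unb — the multiplicity of the tuple encoding a solution mapping μ, for each graph identifier j, equals the sum over all pairs (μ1, μ2) of compatible mappings with μ1 ∈ ⟦P1⟧_{D(G_j)}, μ2 ∈ ⟦P2⟧_{D(G_j)}, and μ1 ∪ μ2 = μ, of the product of the multiplicity of μ1 in ⟦P1⟧_{D(G_j)} and the multiplicity of μ2 in ⟦P2⟧_{D(G_j)}; hence the translation correctly represents the SPARQL Join ⟦P1⟧_{D(G_j)} ⋈ ⟦P2⟧_{D(G_j)}. -/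

import Mathlib

/-!
Core formalization of SPARQL 1.1 multiset semantics and of the paper's
translation of SPARQL graph patterns into bag-semantics relational algebra
over the base relations `Graphs` and `Quads`.

Tuples of a translated expression `⟪P⟫^G` (whose attributes are the graph
attribute `G` together with the in-scope variables `var(P)`) are encoded as
pairs `(j, μ) : ℕ × SolMap`, where `j` is the value of the graph attribute and
`μ v = some t` means the attribute `v` holds the RDF term `t`, while
`μ v = none` means the attribute `v` holds the distinguished value `unb`.
-/

noncomputable section
open Classical

/-- RDF terms: IRIs, blank nodes and literals. -/
inductive RDFTerm where
  | iri : String → RDFTerm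
  | blank : String → RDFTerm
  | lit : String → RDFTerm
deriving DecidableEq

abbrev Var := String
abbrev Triple := RDFTerm × RDFTerm × RDFTerm
/-- A graph is a set of triples (no duplicates). -/
abbrev RDFGraph := Finset Triple

/-- An RDF dataset: a default graph and named graphs with pairwise distinct IRIs. -/
structure Dataset where
  dflt : RDFGraph
  named : List (String × RDFGraph)
  distinctNames : (named.map Prod.fst).Nodup

instance : Zero (Option RDFTerm) := ⟨none⟩

/-- A solution mapping: a partial function from variables to RDF terms
(finitely supported; `none` = the variable is unbound / attribute value `unb`). -/
abbrev SolMap := Var →₀ Option RDFTerm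

/-- Domain of a solution mapping. -/
def dom (μ : SolMap) : Finset Var := μ.support

/-- Two solution mappings are compatible if they agree on their common domain. -/
def compatible (μ1 μ2 : SolMap) : Prop := ∀ v ∈ dom μ1 ∩ dom μ2, μ1 v = μ2 v

/-- Union (merge) of two solution mappings; pointwise, this is the function
`first` of the paper: take the first value that is not `unb`. -/
def munion (μ1 μ2 : SolMap) : SolMap :=
  Finsupp.zipWith (fun a b => a.orElse (fun _ => b)) rfl μ1 μ2

/-- SPARQL Join of two multisets of solution mappings:
`Ω1 ⋈ Ω2 = {| μ1 ∪ μ2 : μ1 ∈ Ω1, μ2 ∈ Ω2, μ1 and μ2 compatible |}`. -/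
def mJoin (Ω1 Ω2 : Multiset SolMap) : Multiset SolMap :=
  Ω1.bind fun μ1 => (Ω2.filter fun μ2 => compatible μ1 μ2).map fun μ2 => munion μ1 μ2

/-- A component of a triple pattern: an RDF term or a variable. -/
inductive TP where
  | term : RDFTerm → TP
  | var : Var → TP
deriving DecidableEq

mutual
/-- SPARQL graph patterns.  `opt P1 P2 R` is `(P1 OPTIONAL (P2 FILTER R))`;
plain `OPTIONAL` is recovered with `R = FilterExpr.tt`. -/
inductive Pattern where
  | empty : Pattern
  | triple : TP → TP → TP → Pattern
  | and : Pattern → Pattern → Pattern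
  | union : Pattern → Pattern → Pattern
  | minus : Pattern → Pattern → Pattern
  | opt : Pattern → Pattern → FilterExpr → Pattern
  | filter : Pattern → FilterExpr → Pattern
  | graphIRI : String → Pattern → Pattern
  | graphVar : Var → Pattern → Pattern

/-- SPARQL filter expressions; `base` is an abstract boolean condition on the
current solution mapping, `ex`/`nex` are `EXISTS`/`NOT EXISTS` patterns. -/
inductive FilterExpr where
  | tt : FilterExpr
  | base : (SolMap → Prop) → FilterExpr
  | ex : Pattern → FilterExpr
  | nex : Pattern → FilterExpr
  | fand : FilterExpr → FilterExpr → FilterExpr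
  | forr : FilterExpr → FilterExpr → FilterExpr
  | fnot : FilterExpr → FilterExpr
end

def varTP : TP → Finset Var
  | .term _ => ∅
  | .var v => {v}

/-- In-scope variables `var(P)` of a graph pattern. -/
def varP : Pattern → Finset Var
  | .empty => ∅
  | .triple s p o => varTP s ∪ varTP p ∪ varTP o
  | .and P1 P2 => varP P1 ∪ varP P2
  | .union P1 P2 => varP P1 ∪ varP P2
  | .minus P1 _ => varP P1
  | .opt P1 P2 _ => varP P1 ∪ varP P2
  | .filter P1 _ => varP P1
  | .graphIRI _ P1 => varP P1
  | .graphVar v P1 => insert v (varP P1)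

/-- Substitution of a solution mapping in a triple-pattern component. -/
def substTP (μ : SolMap) : TP → TP
  | .term a => .term a
  | .var v =>
      match μ v with
      | some t => .term t
      | none => .var v

/-- Unification of a triple-pattern component with an RDF term, extending a
solution mapping (handles repeated variables). -/
def unify : TP → RDFTerm → SolMap → Option SolMap
  | .term a, b, μ => if a = b then some μ else none
  | .var v, b, μ =>
      match μ v with
      | none => some (Finsupp.update μ v (some b))
      | some c => if c = b then some μ else none

/-- Matching a triple pattern against a triple: returns the unique solution
mapping `μ` with `dom μ = var(t)` and `μ(t) = tr`, if it exists. -/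
def matchT (s p o : TP) (tr : Triple) : Option SolMap :=
  (unify s tr.1 0).bind fun μ1 => (unify p tr.2.1 μ1).bind fun μ2 => unify o tr.2.2 μ2

/-- Number of named graphs of the dataset; graph identifiers are `0, …, nGraphs D`. -/
def nGraphs (D : Dataset) : ℕ := D.named.length

/-- The graph with identifier `j` (`0` is the default graph). -/
def graphAt (D : Dataset) : ℕ → RDFGraph
  | 0 => D.dflt
  | Nat.succ k => ((D.named[k]?).map Prod.snd).getD ∅

/-- The graph identifier of the named graph with IRI `u`, if any. -/
def gidOf (D : Dataset) (u : String) : Option ℕ :=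
  (D.named.findIdx? (fun x => x.1 = u)).map (· + 1)

/-- The named graphs of the dataset, enumerated with their identifiers. -/
def namedEnum (D : Dataset) : List (ℕ × String) :=
  (D.named.zipIdx.map Prod.swap).map fun p => (p.1 + 1, p.2.1)

mutual
/-- SPARQL 1.1 evaluation `⟦pre(P)⟧_{D(G_g)}` of the graph pattern `P`,
pre-instantiated by the substitution `pre` (needed for `EXISTS`),
over the dataset `D` with active graph `G_g`.  The plain evaluation
`⟦P⟧_{D(G_g)}` is `evalPat D 0 g P`. -/
def evalPat (D : Dataset) (pre : SolMap) : ℕ → Pattern → Multiset SolMap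
  | _, .empty => {0}
  | g, .triple s p o =>
      (graphAt D g).val.filterMap fun tr =>
        matchT (substTP pre s) (substTP pre p) (substTP pre o) tr
  | g, .and P1 P2 => mJoin (evalPat D pre g P1) (evalPat D pre g P2)
  | g, .union P1 P2 => evalPat D pre g P1 + evalPat D pre g P2
  | g, .minus P1 P2 =>
      (evalPat D pre g P1).filter fun μ1 =>
        ∀ μ2 ∈ evalPat D pre g P2, ¬ compatible μ1 μ2 ∨ dom μ1 ∩ dom μ2 = ∅
  | g, .opt P1 P2 R =>
      ((mJoin (evalPat D pre g P1) (evalPat D pre g P2)).filter fun μ => satF D pre g R μ)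
      + ((evalPat D pre g P1).filter fun μ1 =>
          ∀ μ2 ∈ evalPat D pre g P2,
            ¬ compatible μ1 μ2 ∨ (compatible μ1 μ2 ∧ ¬ satF D pre g R (munion μ1 μ2)))
  | g, .filter P1 R => (evalPat D pre g P1).filter fun μ => satF D pre g R μ
  | _, .graphIRI u P1 =>
      match gidOf D u with
      | some i => evalPat D pre i P1
      | none => 0
  | g, .graphVar v P1 =>
      match pre v with
      | some (RDFTerm.iri u) =>
          (match gidOf D u with
           | some i => evalPat D pre i P1
           | none => 0)
      | some _ => 0
      | none =>
          (↑(namedEnum D) : Multiset (ℕ × String)).bind fun p =>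
            mJoin (evalPat D pre p.1 P1) {Finsupp.single v (some (RDFTerm.iri p.2))}
termination_by g P => sizeOf P

/-- Satisfaction `μ ⊨_{D(G_g)} R` of a filter expression by a solution mapping,
under the pre-instantiation `pre`; `EXISTS(P)` holds iff `⟦μ(P)⟧_{D(G_g)}`
is a non-empty multiset. -/
def satF (D : Dataset) (pre : SolMap) : ℕ → FilterExpr → SolMap → Prop
  | _, .tt, _ => True
  | _, .base f, μ => f μ
  | g, .ex P, μ => evalPat D (munion pre μ) g P ≠ 0
  | g, .nex P, μ => evalPat D (munion pre μ) g P = 0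
  | g, .fand R1 R2, μ => satF D pre g R1 μ ∧ satF D pre g R2 μ
  | g, .forr R1 R2, μ => satF D pre g R1 μ ∨ satF D pre g R2 μ
  | g, .fnot R1, μ => ¬ satF D pre g R1 μ
termination_by g R μ => sizeOf R
end

/-! ### The base relations `Graphs` and `Quads` and the relational translation -/

/-- The base relation `Graphs(gid, IRI)`: the tuple `(0, <>)` for the default
graph (no IRI) and a tuple `(i, u_i)` for each named graph. -/
def graphsRel (D : Dataset) : Multiset (ℕ × Option String) :=
  ↑((0, (none : Option String)) :: (namedEnum D).map fun p => (p.1, some p.2))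

/-- The base relation `Quads(gid, sub, pred, obj)`. -/
def quadsRel (D : Dataset) : Multiset (ℕ × Triple) :=
  (graphsRel D).bind fun p => (graphAt D p.1).val.map fun tr => (p.1, tr)

/-- `⟪()⟫^G = Π_G[ρ_{G←gid}(Graphs)]`, the translation of the empty graph
pattern (tuples have the single attribute `G`, i.e. second component `0`). -/
def unitRel (D : Dataset) : Multiset (ℕ × SolMap) := (graphsRel D).map fun p => (p.1, 0)

/-- The condition `comp`: for each common variable `v`,
`v' = unb ∨ v'' = unb ∨ v' = v''`. -/
def compCond (common : Finset Var) (μ1 μ2 : SolMap) : Prop :=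
  ∀ v ∈ common, μ1 v = none ∨ μ2 v = none ∨ μ1 v = μ2 v

/-- The condition `disj`: for each common variable `v`, `v = unb ∨ v' = unb`. -/
def disjCond (common : Finset Var) (μ1 μ2 : SolMap) : Prop :=
  ∀ v ∈ common, μ1 v = none ∨ μ2 v = none

/-- The condition `subst`: for each common variable `v`, `v = v' ∨ v = unb`. -/
def substCond (common : Finset Var) (μ μ' : SolMap) : Prop :=
  ∀ v ∈ common, μ v = μ' v ∨ μ v = none

/-- The translation of `AND`: rename the common variables apart, join on the
graph attribute, select with `comp`, and project back using `first`. -/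
def transAnd (common : Finset Var) (R1 R2 : Multiset (ℕ × SolMap)) : Multiset (ℕ × SolMap) :=
  R1.bind fun t1 => R2.bind fun t2 =>
    if t1.1 = t2.1 ∧ compCond common t1.2 t2.2 then {(t1.1, munion t1.2 t2.2)} else 0

/-- Bag-semantics natural join of two relations over identical attribute sets
(tuples join exactly with equal tuples, multiplicities multiply). -/
def bagJoinSame (A B : Multiset (ℕ × SolMap)) : Multiset (ℕ × SolMap) :=
  A.bind fun t => Multiset.replicate (B.count t) t

/-- Projection of a tuple onto a set of variable attributes. -/
def restrict (μ : SolMap) (S : Finset Var) : SolMap :=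
  Finsupp.filter (fun v => v ∈ S) μ

/-- The translation of `MINUS`:
`⟪P1⟫ ⋈ [δ(⟪P1⟫) − Π_{G,var(P1)}(σ_{comp ∧ ¬disj}(⟪P1⟫ ⋈ ρ(⟪P2⟫)))]`. -/
def transMinus (common : Finset Var) (R1 R2 : Multiset (ℕ × SolMap)) : Multiset (ℕ × SolMap) :=
  let inner := R1.bind fun t1 => R2.bind fun t2 =>
    if t1.1 = t2.1 ∧ compCond common t1.2 t2.2 ∧ ¬ disjCond common t1.2 t2.2 then {t1} else 0
  bagJoinSame R1 (R1.dedup - inner)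

/-- The auxiliary expression `E_i` of the translation of `FILTER`, for an
`EXISTS`/`NOT EXISTS` subpattern with translation `Pi'`:
`Π_{G,var(P),ex_i←0}[δ(P') − Π_{G,var(P)}(σ_subst(P' ⋈ ρ(Pi')))]
 ∪ Π_{G,var(P),ex_i←1}[δ(P') − [δ(P') − Π_{G,var(P)}(σ_subst(P' ⋈ ρ(Pi')))]]`. -/
def buildE (VP Vi : Finset Var) (P' Pi' : Multiset (ℕ × SolMap)) :
    Multiset (ℕ × SolMap × ℕ) :=
  let inner := P'.bind fun t => Pi'.bind fun t' =>
    if t.1 = t'.1 ∧ substCond (VP ∩ Vi) t.2 t'.2 then {t} else 0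
  ((P'.dedup - inner).map fun t => (t.1, t.2, 0))
  + ((P'.dedup - (P'.dedup - inner)).map fun t => (t.1, t.2, 1))

/-- Evaluation of the relational condition `filter` obtained from `R`, where
the occurrences of `EXISTS(P_i)` (resp. `NOT EXISTS(P_i)`), in left-to-right
order, are replaced by `ex_i <> 0` (resp. `ex_i = 0`), the values of the
attributes `ex_i` being supplied by the list `bs`. -/
def condEval : FilterExpr → SolMap → List ℕ → Prop × List ℕ
  | .tt, _, bs => (True, bs)
  | .base f, μ, bs => (f μ, bs)
  | .ex _, _, bs => (bs.headD 0 ≠ 0, bs.tail)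
  | .nex _, _, bs => (bs.headD 0 = 0, bs.tail)
  | .fand R1 R2, μ, bs =>
      let r1 := condEval R1 μ bs
      let r2 := condEval R2 μ r1.2
      (r1.1 ∧ r2.1, r2.2)
  | .forr R1 R2, μ, bs =>
      let r1 := condEval R1 μ bs
      let r2 := condEval R2 μ r1.2
      (r1.1 ∨ r2.1, r2.2)
  | .fnot R1, μ, bs =>
      let r1 := condEval R1 μ bs
      (¬ r1.1, r1.2)

/-- Natural join of the running relation with an auxiliary relation `E_i`
(join on the graph attribute and all the variable attributes). -/
def joinE (A : Multiset (ℕ × SolMap × List ℕ)) (E : Multiset (ℕ × SolMap × ℕ)) :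
    Multiset (ℕ × SolMap × List ℕ) :=
  A.bind fun a => E.bind fun e =>
    if a.1 = e.1 ∧ a.2.1 = e.2.1 then {(a.1, a.2.1, a.2.2 ++ [e.2.2])} else 0

/-- The translation of `FILTER`:
`Π_{G,var(P)}[σ_filter(P' ⋈ E_1 ⋈ … ⋈ E_m)]`. -/
def filterApply (P' : Multiset (ℕ × SolMap)) (Es : List (Multiset (ℕ × SolMap × ℕ)))
    (R : FilterExpr) : Multiset (ℕ × SolMap) :=
  ((Es.foldl joinE (P'.map fun t => (t.1, t.2, ([] : List ℕ)))).filter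
      fun x => (condEval R x.2.1 x.2.2).1).map fun x => (x.1, x.2.1)

mutual
/-- The paper's translation `⟪P⟫^G` of a graph pattern into a bag-semantics
relational algebra expression over `Graphs` and `Quads`, evaluated;
tuples are encoded as pairs `(j, μ)` (graph attribute value, values of the
variable attributes with `none` = `unb`). -/
def transP (D : Dataset) : Pattern → Multiset (ℕ × SolMap)
  | .empty => unitRel D
  | .triple s p o =>
      (quadsRel D).filterMap fun q => (matchT s p o q.2).map fun μ => (q.1, μ)
  | .and P1 P2 => transAnd (varP P1 ∩ varP P2) (transP D P1) (transP D P2)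
  | .union P1 P2 => transP D P1 + transP D P2
  | .minus P1 P2 => transMinus (varP P1 ∩ varP P2) (transP D P1) (transP D P2)
  | .opt P1 P2 R =>
      let R1 := transP D P1
      let J := transAnd (varP P1 ∩ varP P2) R1 (transP D P2)
      let F := filterApply J (transEs D (varP P1 ∪ varP P2) J R) R
      J + bagJoinSame R1 (R1.dedup - F.map fun t => (t.1, restrict t.2 (varP P1)))
  | .filter P1 R =>
      let P' := transP D P1
      filterApply P' (transEs D (varP P1) P' R) R
  | .graphIRI u P1 =>
      let inner : Multiset SolMap :=
        (graphsRel D).bind fun p =>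
          if p.2 = some u then (transP D P1).bind (fun t => if t.1 = p.1 then {t.2} else 0)
          else 0
      (graphsRel D).bind fun p => inner.map fun μ => (p.1, μ)
  | .graphVar v P1 =>
      let inner : Multiset SolMap :=
        (graphsRel D).bind fun p =>
          match p.2 with
          | some u =>
              (transP D P1).bind fun t =>
                if t.1 = p.1 then
                  (if v ∈ varP P1 then (if t.2 v = some (RDFTerm.iri u) then {t.2} else 0)
                   else {Finsupp.update t.2 v (some (RDFTerm.iri u))})
                else 0
          | none => 0
      (graphsRel D).bind fun p => inner.map fun μ => (p.1, μ)
termination_by P => sizeOf P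

/-- The list of auxiliary expressions `E_1, …, E_m`, one for each occurrence of
`EXISTS`/`NOT EXISTS` in the filter expression, in left-to-right order. -/
def transEs (D : Dataset) (VP : Finset Var) (P' : Multiset (ℕ × SolMap)) :
    FilterExpr → List (Multiset (ℕ × SolMap × ℕ))
  | .tt => []
  | .base _ => []
  | .ex Pi => [buildE VP (varP Pi) P' (transP D Pi)]
  | .nex Pi => [buildE VP (varP Pi) P' (transP D Pi)]
  | .fand R1 R2 => transEs D VP P' R1 ++ transEs D VP P' R2
  | .forr R1 R2 => transEs D VP P' R1 ++ transEs D VP P' R2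
  | .fnot R1 => transEs D VP P' R1
termination_by R => sizeOf R
end

/-- `⟪P⟫^G` correctly represents `⟦P⟧_{D(G_j)}` for every graph identifier `j`
of the dataset: for each `j` the tuples with graph attribute `j` are in
one-to-one multiplicity-preserving correspondence with the solution mappings
(`unb`, i.e. `none`, encoding that a variable is unbound). -/
def RepOK (D : Dataset) (P : Pattern) : Prop :=
  ∀ j ≤ nGraphs D, ∀ μ : SolMap, (transP D P).count (j, μ) = (evalPat D 0 j P).count μ



lemma dom_munion (μ1 μ2 : SolMap) : dom (munion μ1 μ2) ⊆ dom μ1 ∪ dom μ2 :=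
  Finsupp.support_zipWith

lemma unify_dom {t : TP} {b : RDFTerm} {μ0 μ : SolMap} (h : unify t b μ0 = some μ) :
    dom μ ⊆ dom μ0 ∪ varTP t := by
  cases t with
  | term a =>
      simp only [unify] at h
      split at h
      · simp_all [dom]
      · simp at h
  | var v =>
      simp only [unify] at h
      cases hv : μ0 v with
      | none =>
          simp only [hv, Option.some.injEq] at h
          subst h
          rw [dom, Finsupp.support_update_ne_zero _ _ (by simp [Zero.zero])]
          intro x hx
          simp only [Finset.mem_insert] at hx
          rcases hx with h | h <;> simp [varTP, dom, h]
      | some c =>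
          simp only [hv] at h
          split at h
          · simp only [Option.some.injEq] at h
            subst h
            exact Finset.subset_union_left
          · simp at h

lemma matchT_dom {s p o : TP} {tr : Triple} {μ : SolMap} (h : matchT s p o tr = some μ) :
    dom μ ⊆ varTP s ∪ varTP p ∪ varTP o := by
  simp only [matchT, Option.bind_eq_some_iff] at h
  obtain ⟨μ1, h1, μ2, h2, h3⟩ := h
  have d1 := unify_dom h1
  have d2 := unify_dom h2
  have d3 := unify_dom h3
  intro x hx
  rcases Finset.mem_union.mp (d3 hx) with h | h
  · rcases Finset.mem_union.mp (d2 h) with h' | h'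
    · rcases Finset.mem_union.mp (d1 h') with h'' | h''
      · simp [dom] at h''
      · exact Finset.mem_union_left _ (Finset.mem_union_left _ h'')
    · exact Finset.mem_union_left _ (Finset.mem_union_right _ h')
  · exact Finset.mem_union_right _ h

lemma varTP_substTP (pre : SolMap) (t : TP) : varTP (substTP pre t) ⊆ varTP t := by
  cases t with
  | term a => simp [substTP]
  | var v =>
      simp only [substTP]
      cases pre v <;> simp [varTP]

lemma dom_eval_aux : ∀ (n : ℕ) (P : Pattern), sizeOf P ≤ n →
    ∀ (D : Dataset) (pre : SolMap) (g : ℕ) (μ : SolMap),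
      μ ∈ evalPat D pre g P → dom μ ⊆ varP P := by
  intro n
  induction n with
  | zero => intro P hP; exfalso; cases P <;> simp at hP
  | succ n ih =>
    intro P hP D pre g μ hμ
    cases P with
    | empty =>
        simp [evalPat] at hμ
        subst hμ; simp [dom]
    | triple s p o =>
        simp only [evalPat, Multiset.mem_filterMap] at hμ
        obtain ⟨tr, _, htr⟩ := hμ
        intro x hx
        have := matchT_dom htr hx
        simp only [varP, Finset.mem_union] at this ⊢
        rcases this with (h | h) | h
        · exact Or.inl (Or.inl (varTP_substTP pre s h))
        · exact Or.inl (Or.inr (varTP_substTP pre p h))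
        · exact Or.inr (varTP_substTP pre o h)
    | and P1 P2 =>
        simp only [evalPat, mJoin, Multiset.mem_bind, Multiset.mem_map,
          Multiset.mem_filter] at hμ
        obtain ⟨μ1, h1, μ2, ⟨h2, _⟩, he⟩ := hμ
        subst he
        refine (dom_munion μ1 μ2).trans ?_
        have s1 : sizeOf P1 ≤ n := by have := hP; simp at this; omega
        have s2 : sizeOf P2 ≤ n := by have := hP; simp at this; omega
        exact Finset.union_subset_union (ih P1 s1 D pre g μ1 h1) (ih P2 s2 D pre g μ2 h2)
    | union P1 P2 =>
        simp only [evalPat, Multiset.mem_add] at hμ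
        have s1 : sizeOf P1 ≤ n := by have := hP; simp at this; omega
        have s2 : sizeOf P2 ≤ n := by have := hP; simp at this; omega
        rcases hμ with h | h
        · exact (ih P1 s1 D pre g μ h).trans (by simp [varP])
        · exact (ih P2 s2 D pre g μ h).trans (by simp [varP])
    | minus P1 P2 =>
        simp only [evalPat, Multiset.mem_filter] at hμ
        have s1 : sizeOf P1 ≤ n := by have := hP; simp at this; omega
        exact ih P1 s1 D pre g μ hμ.1
    | opt P1 P2 R =>
        have s1 : sizeOf P1 ≤ n := by have := hP; simp at this; omega
        have s2 : sizeOf P2 ≤ n := by have := hP; simp at this; omega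
        simp only [evalPat, Multiset.mem_add, Multiset.mem_filter, mJoin,
          Multiset.mem_bind, Multiset.mem_map] at hμ
        rcases hμ with ⟨⟨μ1, h1, μ2, ⟨h2, _⟩, he⟩, _⟩ | ⟨h1, _⟩
        · subst he
          refine (dom_munion μ1 μ2).trans ?_
          exact Finset.union_subset_union (ih P1 s1 D pre g μ1 h1) (ih P2 s2 D pre g μ2 h2)
        · exact (ih P1 s1 D pre g μ h1).trans (by simp [varP])
    | filter P1 R =>
        simp only [evalPat, Multiset.mem_filter] at hμ
        have s1 : sizeOf P1 ≤ n := by have := hP; simp at this; omega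
        exact ih P1 s1 D pre g μ hμ.1
    | graphIRI u P1 =>
        have s1 : sizeOf P1 ≤ n := by have := hP; simp at this; omega
        cases h : gidOf D u with
        | none => simp [evalPat, h] at hμ
        | some i =>
            simp only [evalPat, h] at hμ
            exact ih P1 s1 D pre i μ hμ
    | graphVar v P1 =>
        have s1 : sizeOf P1 ≤ n := by have := hP; simp at this; omega
        cases h : pre v with
        | none =>
            simp only [evalPat, h, Multiset.mem_bind, mJoin, Multiset.mem_map,
              Multiset.mem_filter, Multiset.mem_singleton] at hμ
            obtain ⟨p, _, μ1, h1, μ2, ⟨h2, _⟩, he⟩ := hμ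
            subst h2; subst he
            refine (dom_munion _ _).trans ?_
            intro x hx
            simp only [Finset.mem_union] at hx
            simp only [varP, Finset.mem_insert]
            rcases hx with hx | hx
            · exact Or.inr (ih P1 s1 D pre p.1 μ1 h1 hx)
            · left
              have := Finsupp.support_single_subset hx
              simpa using this
        | some t =>
            cases t with
            | iri u =>
                cases hg : gidOf D u with
                | none => simp [evalPat, h, hg] at hμ
                | some i =>
                    simp only [evalPat, h, hg] at hμ
                    exact (ih P1 s1 D pre i μ hμ).trans (by simp [varP])
            | blank s => simp [evalPat, h] at hμ
            | lit s => simp [evalPat, h] at hμ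

lemma dom_eval {D : Dataset} {P : Pattern} {g : ℕ} {μ : SolMap}
    (h : μ ∈ evalPat D 0 g P) : dom μ ⊆ varP P :=
  dom_eval_aux (sizeOf P) P le_rfl D 0 g μ h

lemma comp_iff {V1 V2 : Finset Var} {μ1 μ2 : SolMap}
    (h1 : dom μ1 ⊆ V1) (h2 : dom μ2 ⊆ V2) :
    compCond (V1 ∩ V2) μ1 μ2 ↔ compatible μ1 μ2 := by
  constructor
  · intro hc v hv
    rcases Finset.mem_inter.mp hv with ⟨hv1, hv2⟩
    have hm1 : μ1 v ≠ none := Finsupp.mem_support_iff.mp hv1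
    have hm2 : μ2 v ≠ none := Finsupp.mem_support_iff.mp hv2
    rcases hc v (Finset.mem_inter.mpr ⟨h1 hv1, h2 hv2⟩) with h | h | h
    · exact absurd h hm1
    · exact absurd h hm2
    · exact h
  · intro hc v _
    by_cases hv1 : v ∈ dom μ1
    · by_cases hv2 : v ∈ dom μ2
      · exact Or.inr (Or.inr (hc v (Finset.mem_inter.mpr ⟨hv1, hv2⟩)))
      · exact Or.inr (Or.inl (Finsupp.notMem_support_iff.mp hv2))
    · exact Or.inl (Finsupp.notMem_support_iff.mp hv1)

lemma card_filter_eq_sum {α : Type*} [DecidableEq α] (s : Multiset α) (p : α → Prop)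
    [DecidablePred p] :
    Multiset.card (s.filter p) = ∑ a ∈ s.toFinset, if p a then s.count a else 0 := by
  calc Multiset.card (s.filter p)
      = ∑ a ∈ (s.filter p).toFinset, (s.filter p).count a := (Multiset.toFinset_sum_count_eq _).symm
    _ = ∑ a ∈ s.toFinset, (s.filter p).count a := by
        refine Finset.sum_subset (Multiset.toFinset_subset.mpr (Multiset.filter_subset _ _)) ?_
        intro x _ hx
        exact Multiset.count_eq_zero.mpr (fun h => hx (Multiset.mem_toFinset.mpr h))
    _ = ∑ a ∈ s.toFinset, if p a then s.count a else 0 := by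
        refine Finset.sum_congr rfl fun a _ => ?_
        rw [Multiset.count_filter]

lemma mJoin_count (Ω1 Ω2 : Multiset SolMap) (μ : SolMap) :
    (mJoin Ω1 Ω2).count μ
      = ∑ q ∈ Ω1.toFinset ×ˢ Ω2.toFinset,
          if compatible q.1 q.2 ∧ munion q.1 q.2 = μ then Ω1.count q.1 * Ω2.count q.2 else 0 := by
  rw [mJoin, Multiset.count_bind, Finset.sum_product,
    Finset.sum_multiset_map_count]
  refine Finset.sum_congr rfl fun μ1 _ => ?_
  rw [smul_eq_mul]
  have : Multiset.count μ ((Ω2.filter fun μ2 => compatible μ1 μ2).map fun μ2 => munion μ1 μ2)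
      = ∑ μ2 ∈ Ω2.toFinset, if compatible μ1 μ2 ∧ munion μ1 μ2 = μ then Ω2.count μ2 else 0 := by
    rw [Multiset.count_map]
    rw [Multiset.filter_filter]
    rw [card_filter_eq_sum]
    refine Finset.sum_congr rfl fun μ2 _ => ?_
    congr 1
    simp only [eq_iff_iff]
    tauto
  rw [this, Finset.mul_sum]
  refine Finset.sum_congr rfl fun μ2 _ => ?_
  split <;> simp


lemma count_if_single {α : Type*} [DecidableEq α] (c : Prop) [Decidable c] (x a : α) :
    Multiset.count a (if c then ({x} : Multiset α) else 0) = if c ∧ x = a then 1 else 0 := by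
  split_ifs with h1 h2 h3 <;> simp_all [Multiset.count_singleton, eq_comm]

lemma transAnd_count (C : Finset Var) (R1 R2 : Multiset (ℕ × SolMap)) (j : ℕ) (μ : SolMap) :
    (transAnd C R1 R2).count (j, μ)
      = ∑ t ∈ R1.toFinset ×ˢ R2.toFinset,
          if t.1.1 = t.2.1 ∧ compCond C t.1.2 t.2.2 ∧ t.1.1 = j ∧ munion t.1.2 t.2.2 = μ then
            R1.count t.1 * R2.count t.2
          else 0 := by
  rw [transAnd, Multiset.count_bind, Finset.sum_multiset_map_count, Finset.sum_product]
  refine Finset.sum_congr rfl fun t1 _ => ?_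
  rw [smul_eq_mul, Multiset.count_bind, Finset.sum_multiset_map_count, Finset.mul_sum]
  refine Finset.sum_congr rfl fun t2 _ => ?_
  rw [smul_eq_mul, count_if_single]
  simp only [Prod.mk.injEq]
  split_ifs with h1 h2 h2
  · ring
  · exact absurd ⟨h1.1.1, h1.1.2, h1.2.1, h1.2.2⟩ h2
  · exact absurd ⟨⟨h2.1, h2.2.1⟩, h2.2.2.1, h2.2.2.2⟩ h1
  · ring

/-- If `⟪P1⟫^G` and `⟪P2⟫^G` correctly represent `⟦P1⟧` and
`⟦P2⟧` for each graph identifier, then in `⟪(P1 AND P2)⟫^G` (rename the common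
variables apart, join on `G`, select with `comp`, project with
`v_i ← first(v'_i, v''_i)`) the multiplicity of the tuple encoding a solution
mapping `μ` equals the sum, over all pairs `(μ1, μ2)` of compatible mappings
with `μ1 ∈ ⟦P1⟧_{D(G_j)}`, `μ2 ∈ ⟦P2⟧_{D(G_j)}` and `μ1 ∪ μ2 = μ`, of the
products of multiplicities; hence the translation correctly represents the
SPARQL Join `⟦P1⟧_{D(G_j)} ⋈ ⟦P2⟧_{D(G_j)}`. -/
theorem and_correct (D : Dataset) (P1 P2 : Pattern)
    (h1 : RepOK D P1) (h2 : RepOK D P2) :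
    ∀ j ≤ nGraphs D, ∀ μ : SolMap,
      (transP D (.and P1 P2)).count (j, μ)
          = ∑ q ∈ (evalPat D 0 j P1).toFinset ×ˢ (evalPat D 0 j P2).toFinset,
              (if compatible q.1 q.2 ∧ munion q.1 q.2 = μ then
                (evalPat D 0 j P1).count q.1 * (evalPat D 0 j P2).count q.2
               else 0)
      ∧ (transP D (.and P1 P2)).count (j, μ) = (evalPat D 0 j (.and P1 P2)).count μ := by
  intro j hj μ
  have hand : transP D (.and P1 P2)
      = transAnd (varP P1 ∩ varP P2) (transP D P1) (transP D P2) := by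
    simp [transP]
  have heval : evalPat D 0 j (.and P1 P2)
      = mJoin (evalPat D 0 j P1) (evalPat D 0 j P2) := by
    simp [evalPat]
  set Ω1 := evalPat D 0 j P1 with hΩ1def
  set Ω2 := evalPat D 0 j P2 with hΩ2def
  set R1 := transP D P1 with hR1def
  set R2 := transP D P2 with hR2def
  have hc1 : ∀ μ' : SolMap, R1.count (j, μ') = Ω1.count μ' := h1 j hj
  have hc2 : ∀ μ' : SolMap, R2.count (j, μ') = Ω2.count μ' := h2 j hj
  have key : (transP D (.and P1 P2)).count (j, μ)
      = ∑ q ∈ Ω1.toFinset ×ˢ Ω2.toFinset,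
          if compatible q.1 q.2 ∧ munion q.1 q.2 = μ then Ω1.count q.1 * Ω2.count q.2
          else 0 := by
    rw [hand, transAnd_count]
    set e : SolMap × SolMap → (ℕ × SolMap) × (ℕ × SolMap) :=
      fun q => ((j, q.1), (j, q.2)) with he
    set f : (ℕ × SolMap) × (ℕ × SolMap) → ℕ := fun t =>
      if t.1.1 = t.2.1 ∧ compCond (varP P1 ∩ varP P2) t.1.2 t.2.2 ∧ t.1.1 = j ∧
          munion t.1.2 t.2.2 = μ then
        R1.count t.1 * R2.count t.2
      else 0 with hf
    have hmem1 : ∀ μ' : SolMap, (j, μ') ∈ R1.toFinset ↔ μ' ∈ Ω1.toFinset := by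
      intro μ'
      rw [Multiset.mem_toFinset, Multiset.mem_toFinset, ← Multiset.count_pos,
        ← Multiset.count_pos, hc1]
    have hmem2 : ∀ μ' : SolMap, (j, μ') ∈ R2.toFinset ↔ μ' ∈ Ω2.toFinset := by
      intro μ'
      rw [Multiset.mem_toFinset, Multiset.mem_toFinset, ← Multiset.count_pos,
        ← Multiset.count_pos, hc2]
    have himg : (Ω1.toFinset ×ˢ Ω2.toFinset).image e ⊆ R1.toFinset ×ˢ R2.toFinset := by
      intro t ht
      rcases Finset.mem_image.mp ht with ⟨q, hq, rfl⟩
      rcases Finset.mem_product.mp hq with ⟨hq1, hq2⟩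
      exact Finset.mem_product.mpr ⟨(hmem1 q.1).mpr hq1, (hmem2 q.2).mpr hq2⟩
    have hvanish : ∀ t ∈ R1.toFinset ×ˢ R2.toFinset,
        t ∉ (Ω1.toFinset ×ˢ Ω2.toFinset).image e → f t = 0 := by
      intro t ht hnt
      by_contra hft
      have hcond : t.1.1 = t.2.1 ∧ compCond (varP P1 ∩ varP P2) t.1.2 t.2.2 ∧ t.1.1 = j ∧
          munion t.1.2 t.2.2 = μ := by
        by_contra hcond
        exact hft (if_neg hcond)
      rcases Finset.mem_product.mp ht with ⟨ht1, ht2⟩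
      have ht1' : t.1 = (j, t.1.2) := Prod.ext hcond.2.2.1 rfl
      have ht2' : t.2 = (j, t.2.2) := Prod.ext (hcond.1 ▸ hcond.2.2.1) rfl
      refine hnt (Finset.mem_image.mpr ⟨(t.1.2, t.2.2), ?_, ?_⟩)
      · refine Finset.mem_product.mpr ⟨?_, ?_⟩
        · exact (hmem1 t.1.2).mp (ht1' ▸ ht1)
        · exact (hmem2 t.2.2).mp (ht2' ▸ ht2)
      · rw [he]
        exact (Prod.ext ht1'.symm ht2'.symm)
    have hinj : ∀ a ∈ Ω1.toFinset ×ˢ Ω2.toFinset, ∀ b ∈ Ω1.toFinset ×ˢ Ω2.toFinset,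
        e a = e b → a = b := by
      intro a _ b _ hab
      simp only [he, Prod.mk.injEq] at hab
      exact Prod.ext hab.1.2 hab.2.2
    calc ∑ t ∈ R1.toFinset ×ˢ R2.toFinset, f t
        = ∑ t ∈ (Ω1.toFinset ×ˢ Ω2.toFinset).image e, f t :=
          (Finset.sum_subset himg (fun t ht hnt => hvanish t ht hnt)).symm
      _ = ∑ q ∈ Ω1.toFinset ×ˢ Ω2.toFinset, f (e q) := Finset.sum_image hinj
      _ = ∑ q ∈ Ω1.toFinset ×ˢ Ω2.toFinset,
            (if compatible q.1 q.2 ∧ munion q.1 q.2 = μ then Ω1.count q.1 * Ω2.count q.2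
             else 0) := by
          refine Finset.sum_congr rfl fun q hq => ?_
          rcases Finset.mem_product.mp hq with ⟨hq1, hq2⟩
          have hd1 : dom q.1 ⊆ varP P1 := dom_eval (Multiset.mem_toFinset.mp hq1)
          have hd2 : dom q.2 ⊆ varP P2 := dom_eval (Multiset.mem_toFinset.mp hq2)
          rw [hf]
          simp only [he]
          rw [hc1, hc2]
          congr 1
          simp only [eq_iff_iff]
          rw [comp_iff hd1 hd2]
          try tauto
  refine ⟨key, ?_⟩
  rw [key, heval, mJoin_count]


end
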